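/- Every multiplicative Polishable family A of subsets of a Hausdorff topological space X is I-winning for every ideal I on X: the player C has a winning strategy in the Set-Cover game on (A \ I, A). -/

import Mathlib

/-- Player C has a winning strategy in the Set-Cover game `Game(𝒜 \ I, 𝒜)`:
a strategy assigns to each finite history of S-moves a countable cover by members
of 𝒜 of the last move, and any admissible infinite run has nonempty intersection. -/
def CWins {X : Type*} (𝒜 I : Set (Set X)) : Prop :=
  ∃ σ : List (Set X) → Set (Set X),
    (∀ l : List (Set X), ∀ S ∈ 𝒜 \ I,
      (σ (l ++ [S])).Countable ∧ σ (l ++ [S]) ⊆ 𝒜 ∧ S ⊆ ⋃₀ σ (l ++ [S])) ∧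
    (∀ f : ℕ → Set X, (∀ n, f n ∈ 𝒜 \ I) →
      (∀ n : ℕ, ∃ C ∈ σ (List.ofFn fun i : Fin (n + 1) => f i), f (n + 1) ⊆ C) →
      (⋂ n, f n).Nonempty)

/-- A family 𝒜 of subsets of a topological space is Polishable if each member is the
continuous image of a Polish space carrying a base whose images lie in 𝒜. -/
def Polishable {X : Type*} [TopologicalSpace X] (𝒜 : Set (Set X)) : Prop :=
  ∀ A ∈ 𝒜, ∃ (P : Type) (_ : TopologicalSpace P) (_ : PolishSpace P) (f : P → X),
    Continuous f ∧ Set.range f = A ∧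
    ∃ ℬ : Set (Set P), TopologicalSpace.IsTopologicalBasis ℬ ∧ ∀ B ∈ ℬ, f '' B ∈ 𝒜

namespace SetCoverAux

open Set TopologicalSpace
open scoped Classical

noncomputable section Test
variable {X : Type*} [TopologicalSpace X] {𝒜 : Set (Set X)} {A : Set X}

structure PRep (𝒜 : Set (Set X)) (A : Set X) where
  P : Type
  [ms : MetricSpace P]
  [cs : CompleteSpace P]
  [sc : SecondCountableTopology P]
  F : P → X
  cont : Continuous F
  rng : Set.range F = A
  bas : Set (Set P)
  basis : TopologicalSpace.IsTopologicalBasis bas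
  img : ∀ B ∈ bas, F '' B ∈ 𝒜

instance (r : PRep 𝒜 A) : MetricSpace r.P := r.ms
instance (r : PRep 𝒜 A) : CompleteSpace r.P := r.cs
instance (r : PRep 𝒜 A) : SecondCountableTopology r.P := r.sc

theorem toRep (hPol : Polishable 𝒜) (A : Set X) (hA : A ∈ 𝒜) : Nonempty (PRep 𝒜 A) := by
  obtain ⟨P, t, pol, f, cont, rng, ℬ, basis, img⟩ := hPol A hA
  obtain ⟨m, hm, hcomp⟩ := pol.complete
  subst hm
  letI := m
  letI : CompleteSpace P := hcomp
  letI : SecondCountableTopology P := pol.toSecondCountableTopology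
  exact ⟨⟨P, f, cont, rng, ℬ, basis, img⟩⟩

def eps (n : ℕ) : ENNReal := 2⁻¹ ^ n

lemma eps_pos (n : ℕ) : 0 < eps n := by
  simp [eps, ENNReal.pow_pos]

lemma eps_anti {m n : ℕ} (h : m ≤ n) : eps n ≤ eps m :=
  pow_le_pow_of_le_one zero_le (by norm_num) h

lemma exists_eps_lt {ε : ENNReal} (hε : 0 < ε) : ∃ n, eps n < ε := by
  obtain ⟨n, hn⟩ := ENNReal.exists_inv_two_pow_lt hε.ne'
  exact ⟨n, by simpa [eps, ENNReal.inv_pow] using hn⟩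

lemma exists_cov (r : PRep 𝒜 A) (B : Set r.P) (hB : IsOpen B) (n : ℕ) :
    ∃ D : Set (Set r.P), D.Countable ∧ D ⊆ r.bas ∧
      (∀ d ∈ D, d ⊆ B ∧ EMetric.diam d ≤ eps n) ∧ B ⊆ ⋃₀ D := by
  set D0 : Set (Set r.P) := {d ∈ r.bas | d ⊆ B ∧ EMetric.diam d ≤ eps n} with hD0
  have hcov : B ⊆ ⋃₀ D0 := by
    intro p hp
    have hU : IsOpen (B ∩ EMetric.ball p (eps n / 3)) := hB.inter EMetric.isOpen_ball
    have hpU : p ∈ B ∩ EMetric.ball p (eps n / 3) :=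
      ⟨hp, EMetric.mem_ball_self (ENNReal.div_pos (eps_pos n).ne' (by norm_num))⟩
    obtain ⟨d, hd, hpd, hdsub⟩ := r.basis.exists_subset_of_mem_open hpU hU
    refine ⟨d, ⟨hd, fun q hq => (hdsub hq).1, ?_⟩, hpd⟩
    calc EMetric.diam d ≤ EMetric.diam (EMetric.ball p (eps n / 3)) :=
          EMetric.diam_mono (fun q hq => (hdsub hq).2)
      _ ≤ 2 * (eps n / 3) := EMetric.diam_ball
      _ ≤ 3 * (eps n / 3) := by gcongr; norm_num
      _ ≤ eps n := ENNReal.mul_div_le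
  obtain ⟨T, hTc, hTD, hTu⟩ := TopologicalSpace.isOpen_sUnion_countable D0
    (fun d hd => r.basis.isOpen hd.1)
  exact ⟨T, hTc, fun d hd => (hTD hd).1, fun d hd => ((hTD hd).2 : _),
    by rw [hTu]; exact hcov⟩


section Strategy
variable (R : ∀ A : ↥𝒜, PRep 𝒜 (A : Set X))

/-- canonical countable refinement of an open set `B` in the Polish rep of `A`. -/
def cov (A : ↥𝒜) (B : Set ((R A).P)) (n : ℕ) : Set (Set ((R A).P)) :=
  if h : IsOpen B then (exists_cov (R A) B h n).choose else {Set.univ}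

lemma cov_countable (A : ↥𝒜) (B : Set ((R A).P)) (n : ℕ) : (cov R A B n).Countable := by
  by_cases h : IsOpen B
  · rw [cov, dif_pos h]; exact (exists_cov (R A) B h n).choose_spec.1
  · rw [cov, dif_neg h]; exact countable_singleton _

lemma cov_img (A : ↥𝒜) (B : Set ((R A).P)) (n : ℕ) :
    ∀ d ∈ cov R A B n, (R A).F '' d ∈ 𝒜 := by
  intro d hd
  by_cases h : IsOpen B
  · rw [cov, dif_pos h] at hd
    exact (R A).img d ((exists_cov (R A) B h n).choose_spec.2.1 hd)
  · rw [cov, dif_neg h] at hd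
    rcases hd with rfl
    rw [Set.image_univ, (R A).rng]; exact A.2

lemma cov_open (A : ↥𝒜) (B : Set ((R A).P)) (n : ℕ) :
    ∀ d ∈ cov R A B n, IsOpen d := by
  intro d hd
  by_cases h : IsOpen B
  · rw [cov, dif_pos h] at hd
    exact (R A).basis.isOpen ((exists_cov (R A) B h n).choose_spec.2.1 hd)
  · rw [cov, dif_neg h] at hd
    rcases hd with rfl; exact isOpen_univ

lemma cov_cover (A : ↥𝒜) (B : Set ((R A).P)) (n : ℕ) : B ⊆ ⋃₀ cov R A B n := by
  by_cases h : IsOpen B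
  · rw [cov, dif_pos h]; exact (exists_cov (R A) B h n).choose_spec.2.2.2
  · rw [cov, dif_neg h]; simp

lemma cov_sub_diam (A : ↥𝒜) (B : Set ((R A).P)) (hB : IsOpen B) (n : ℕ) :
    ∀ d ∈ cov R A B n, d ⊆ B ∧ EMetric.diam d ≤ eps n := by
  intro d hd
  rw [cov, dif_pos hB] at hd
  exact (exists_cov (R A) B hB n).choose_spec.2.2.1 d hd

/-- A coordinate: a member of `𝒜` together with a subset of its Polish rep. -/
def Coord : Type _ := Σ A : ↥𝒜, Set ((R A).P)

def Fimg (c : Coord R) : Set X := (R c.1).F '' c.2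

def nxt (n : ℕ) (c : Coord R) : Set (Coord R) := Sigma.mk c.1 '' cov R c.1 c.2 n

def tuples (n : ℕ) (s : List (Coord R)) : Set (List (Coord R)) :=
  {t | List.Forall₂ (fun c c' => c' ∈ nxt R n c) s t}

def TT (t : List (Coord R)) : Set X := ⋂ c ∈ t, Fimg R c

def Cover (s : List (Coord R)) : Set (Set X) := TT R '' tuples R s.length s

def ExtS (s : List (Coord R)) (S : Set X) (s' : List (Coord R)) : Prop :=
  ∃ (hS : S ∈ 𝒜) (t : List (Coord R)),
    List.Forall₂ (fun c c' => c' ∈ nxt R s.length c ∧ S ⊆ Fimg R c') s t ∧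
    s' = t ++ [⟨⟨S, hS⟩, Set.univ⟩]

def step (s : List (Coord R)) (S : Set X) : List (Coord R) :=
  if hS : S ∈ 𝒜 then
    (if h : ∃ s', ExtS R s S s' then h.choose else [⟨⟨S, hS⟩, Set.univ⟩])
  else s

def state (l : List (Set X)) : List (Coord R) := l.foldl (step R) []

def strat (l : List (Set X)) : Set (Set X) := Cover R (state R l)

lemma state_append (l : List (Set X)) (S : Set X) :
    state R (l ++ [S]) = step R (state R l) S := by
  simp [state, List.foldl_append]


lemma forall₂_mem_right {α β : Type*} {Rl : α → β → Prop} :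
    ∀ {s : List α} {t : List β}, List.Forall₂ Rl s t → ∀ c' ∈ t, ∃ c ∈ s, Rl c c' := by
  intro s t h
  induction h with
  | nil => simp
  | cons hR hF ih =>
    intro c' hc'
    rcases List.mem_cons.1 hc' with rfl | hc'
    · exact ⟨_, List.mem_cons_self, hR⟩
    · obtain ⟨c, hc, hcc⟩ := ih c' hc'
      exact ⟨c, List.mem_cons_of_mem _ hc, hcc⟩

lemma forall₂_and_right {α β : Type*} {Rl : α → β → Prop} {Q : β → Prop} :
    ∀ {s : List α} {t : List β}, List.Forall₂ Rl s t → (∀ c' ∈ t, Q c') →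
      List.Forall₂ (fun c c' => Rl c c' ∧ Q c') s t := by
  intro s t h
  induction h with
  | nil => intro; exact List.Forall₂.nil
  | cons hR hF ih =>
    intro hQ
    exact List.Forall₂.cons ⟨hR, hQ _ (List.mem_cons_self)⟩
      (ih fun c' hc' => hQ c' (List.mem_cons_of_mem _ hc'))

lemma tuples_countable (n : ℕ) : ∀ s : List (Coord R), (tuples R n s).Countable := by
  intro s
  induction s with
  | nil =>
    have : tuples R n [] = {([] : List (Coord R))} := by
      ext t; simp [tuples, List.forall₂_nil_left_iff]
    rw [this]; exact countable_singleton _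
  | cons c s ih =>
    have : tuples R n (c :: s) = Set.image2 List.cons (nxt R n c) (tuples R n s) := by
      ext t
      simp only [tuples, Set.mem_setOf_eq, List.forall₂_cons_left_iff, Set.mem_image2]
      constructor
      · rintro ⟨b, u, hb, hu, rfl⟩; exact ⟨b, hb, u, hu, rfl⟩
      · rintro ⟨b, hb, u, hu, rfl⟩; exact ⟨b, u, hb, hu, rfl⟩
    rw [this]
    exact Set.Countable.image2 ((cov_countable R c.1 c.2 n).image _) ih _

lemma Cover_countable (s : List (Coord R)) : (Cover R s).Countable :=
  (tuples_countable R _ s).image _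

lemma mem_nxt {n : ℕ} {c c' : Coord R} (h : c' ∈ nxt R n c) : Fimg R c' ∈ 𝒜 := by
  obtain ⟨d, hd, rfl⟩ := h
  exact cov_img R c.1 c.2 n d hd

lemma Cover_sub (hmult : ∀ ℱ : Set (Set X), ℱ.Finite → ℱ ⊆ 𝒜 → ⋂₀ ℱ ∈ 𝒜)
    (s : List (Coord R)) : Cover R s ⊆ 𝒜 := by
  rintro C ⟨t, ht, rfl⟩
  have : TT R t = ⋂₀ (Fimg R '' {c | c ∈ t}) := by
    rw [Set.sInter_image]; rfl
  rw [this]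
  refine hmult _ ((t.finite_toSet).image _) ?_
  rintro C ⟨c', hc', rfl⟩
  obtain ⟨c, _, hcc⟩ := forall₂_mem_right ht c' hc'
  exact mem_nxt R hcc

lemma TT_subset {t : List (Coord R)} {c : Coord R} (hc : c ∈ t) : TT R t ⊆ Fimg R c :=
  Set.biInter_subset_of_mem hc

lemma exists_tuple (n : ℕ) {x : X} :
    ∀ s : List (Coord R), (∀ c ∈ s, x ∈ Fimg R c) → ∃ t ∈ tuples R n s, x ∈ TT R t := by
  intro s
  induction s with
  | nil =>
    intro _
    refine ⟨[], ?_, ?_⟩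
    · simp [tuples]
    · simp [TT]
  | cons c s ih =>
    intro hx
    obtain ⟨p, hp, hfp⟩ := hx c (List.mem_cons_self)
    obtain ⟨d, hd, hpd⟩ := cov_cover R c.1 c.2 n hp
    obtain ⟨t, ht, hxt⟩ := ih fun c hc => hx c (List.mem_cons_of_mem _ hc)
    refine ⟨⟨c.1, d⟩ :: t, List.Forall₂.cons ⟨d, hd, rfl⟩ ht, ?_⟩
    simp only [TT, Set.mem_iInter]
    intro c' hc'
    rcases List.mem_cons.1 hc' with rfl | hc'
    · exact ⟨p, hpd, hfp⟩
    · exact Set.mem_iInter.1 (Set.mem_iInter.1 hxt c') hc'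

lemma good_cover {S : Set X} {s : List (Coord R)} (hgood : ∀ c ∈ s, S ⊆ Fimg R c) :
    S ⊆ ⋃₀ Cover R s := by
  intro x hx
  obtain ⟨t, ht, hxt⟩ := exists_tuple R s.length s fun c hc => hgood c hc hx
  exact ⟨TT R t, ⟨t, ht, rfl⟩, hxt⟩

lemma ext_univ {S : Set X} (hS : S ∈ 𝒜) (s : List (Coord R)) :
    S ⊆ Fimg R ⟨⟨S, hS⟩, Set.univ⟩ := by
  simp only [Fimg, Set.image_univ]
  rw [(R ⟨S, hS⟩).rng]

lemma good_step {S : Set X} (hS : S ∈ 𝒜) (s : List (Coord R)) :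
    ∀ c ∈ step R s S, S ⊆ Fimg R c := by
  rw [step, dif_pos hS]
  by_cases h : ∃ s', ExtS R s S s'
  · rw [dif_pos h]
    obtain ⟨hS', t, hft, heq⟩ := h.choose_spec
    rw [heq]
    intro c hc
    rcases List.mem_append.1 hc with hc | hc
    · obtain ⟨c₀, _, _, h2⟩ := forall₂_mem_right hft c hc
      exact h2
    · rcases List.mem_singleton.1 hc with rfl
      exact ext_univ R hS' s
  · rw [dif_neg h]
    intro c hc
    rcases List.mem_singleton.1 hc with rfl
    exact ext_univ R hS s

lemma step_ext {S : Set X} (hS : S ∈ 𝒜) {s : List (Coord R)} (h : ∃ s', ExtS R s S s') :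
    ExtS R s S (step R s S) := by
  rw [step, dif_pos hS, dif_pos h]
  exact h.choose_spec

lemma ext_of_cover {S : Set X} (hS : S ∈ 𝒜) {s : List (Coord R)} {C : Set X}
    (hC : C ∈ Cover R s) (hSC : S ⊆ C) : ∃ s', ExtS R s S s' := by
  obtain ⟨t, ht, rfl⟩ := hC
  refine ⟨t ++ [⟨⟨S, hS⟩, Set.univ⟩], hS, t, ?_, rfl⟩
  exact forall₂_and_right ht fun c' hc' => hSC.trans (TT_subset R hc')

lemma ext_nil {S : Set X} (hS : S ∈ 𝒜) : ∃ s', ExtS R [] S s' :=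
  ⟨[⟨⟨S, hS⟩, Set.univ⟩], hS, [], List.Forall₂.nil, rfl⟩


lemma coord_snd {A : ↥𝒜} {B B' : Set ((R A).P)}
    (h : (⟨A, B⟩ : Coord R) = ⟨A, B'⟩) : B = B' := by
  have := (Sigma.mk.inj_iff.mp h).2
  exact eq_of_heq this

def hist (f : ℕ → Set X) (n : ℕ) : List (Set X) := List.ofFn fun i : Fin (n+1) => f i

lemma hist_succ (f : ℕ → Set X) (n : ℕ) : hist f (n+1) = hist f n ++ [f (n+1)] := by
  rw [hist, List.ofFn_succ']
  simp [hist, List.concat_eq_append, Fin.last]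

end Strategy
end Test


end SetCoverAux

open SetCoverAux in
/-- every multiplicative Polishable family on a Hausdorff space is
I-winning for every ideal I. -/
theorem polishable_multiplicative_winning {X : Type*} [TopologicalSpace X] [T2Space X]
    (𝒜 : Set (Set X))
    (hmult : ∀ ℱ : Set (Set X), ℱ.Finite → ℱ ⊆ 𝒜 → ⋂₀ ℱ ∈ 𝒜)
    (hPol : Polishable 𝒜)
    (I : Set (Set X)) (hne : I.Nonempty)
    (hdown : ∀ A B : Set X, A ∈ I → B ⊆ A → B ∈ I)
    (hunion : ∀ A B : Set X, A ∈ I → B ∈ I → A ∪ B ∈ I) :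
    CWins 𝒜 I := by
  classical
  have hUniv : Set.univ ∈ 𝒜 := by simpa using hmult ∅ Set.finite_empty (Set.empty_subset _)
  have hEmptyI : (∅ : Set X) ∈ I := hdown hne.choose ∅ hne.choose_spec (Set.empty_subset _)
  have hR : ∀ A : ↥𝒜, Nonempty (PRep 𝒜 (A : Set X)) := fun A => toRep hPol A A.2
  let R : ∀ A : ↥𝒜, PRep 𝒜 (A : Set X) := fun A => (hR A).some
  refine ⟨strat R, ?_, ?_⟩
  · intro l S hS
    refine ⟨Cover_countable R _, Cover_sub R hmult _, ?_⟩
    show S ⊆ ⋃₀ Cover R (state R (l ++ [S]))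
    rw [state_append]
    exact good_cover R (good_step R hS.1 (state R l))
  · intro f hf hC
    have hfA : ∀ n, f n ∈ 𝒜 := fun n => (hf n).1
    have hfne : ∀ n, (f n).Nonempty := by
      intro n
      rcases Set.eq_empty_or_nonempty (f n) with h | h
      · exact absurd (h ▸ hEmptyI) (hf n).2
      · exact h
    choose x hx using hfne
    have hchain : ∀ n, ExtS R (state R (hist f n)) (f (n+1)) (state R (hist f (n+1))) := by
      intro n
      rw [hist_succ, state_append]
      obtain ⟨C, hC1, hC2⟩ := hC n
      have hC1' : C ∈ Cover R (state R (hist f n)) := hC1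
      exact step_ext R (hfA (n+1)) (ext_of_cover R (hfA (n+1)) hC1' hC2)
    have hs0 : state R (hist f 0) = [⟨⟨f 0, hfA 0⟩, Set.univ⟩] := by
      have h0 : state R (hist f 0) = step R [] (f 0) := rfl
      rw [h0]
      obtain ⟨hS, t, hft, heq⟩ := step_ext R (hfA 0) (ext_nil R (hfA 0))
      rw [List.forall₂_nil_left_iff] at hft
      subst hft
      rw [heq]; rfl
    have hlen : ∀ n, (state R (hist f n)).length = n + 1 := by
      intro n
      induction n with
      | zero => rw [hs0]; rfl
      | succ n ih =>
        obtain ⟨hS, t, hft, heq⟩ := hchain n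
        rw [heq, List.length_append, ← hft.length_eq, ih]; rfl
    let junk : Coord R := ⟨⟨Set.univ, hUniv⟩, ∅⟩
    let g : ℕ → ℕ → Coord R := fun k m => (state R (hist f m)).getD k junk
    have G1 : ∀ m, g m m = ⟨⟨f m, hfA m⟩, Set.univ⟩ := by
      intro m
      cases m with
      | zero => show (state R (hist f 0)).getD 0 junk = _; rw [hs0]; rfl
      | succ m =>
        obtain ⟨hS, t, hft, heq⟩ := hchain m
        have hlt : t.length = m + 1 := by rw [← hft.length_eq, hlen]
        show (state R (hist f (m+1))).getD (m+1) junk = _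
        rw [heq, List.getD_eq_getElem _ _ (by simp [hlt]; exact Nat.zero_lt_one)]
        exact List.getElem_concat_length hlt.symm _
    have G2 : ∀ k m, k ≤ m → g k (m+1) ∈ nxt R ((state R (hist f m)).length) (g k m) ∧
        f (m+1) ⊆ Fimg R (g k (m+1)) := by
      intro k m hkm
      obtain ⟨hS, t, hft, heq⟩ := hchain m
      have hlt : t.length = m + 1 := by rw [← hft.length_eq, hlen]
      have hk1 : k < (state R (hist f m)).length := by rw [hlen]; omega
      have hk2 : k < t.length := by omega
      have hrel := (List.forall₂_iff_get.1 hft).2 k hk1 hk2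
      have e1 : g k m = (state R (hist f m)).get ⟨k, hk1⟩ := by
        show (state R (hist f m)).getD k junk = _
        rw [List.getD_eq_getElem _ _ hk1, List.get_eq_getElem]
      have e2 : g k (m+1) = t.get ⟨k, hk2⟩ := by
        show (state R (hist f (m+1))).getD k junk = _
        rw [heq, List.getD_eq_getElem _ _ (by simp; omega), List.get_eq_getElem,
          List.getElem_append_left hk2]
      rw [e1, e2]; exact hrel
    have main : ∀ k, ∃ z, Filter.Tendsto x Filter.atTop (nhds z) ∧ z ∈ f k := by
      intro k
      have claim1 : ∀ j, ∃ B : Set ((R ⟨f k, hfA k⟩).P), g k (k+j) = ⟨⟨f k, hfA k⟩, B⟩ := by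
        intro j
        induction j with
        | zero => exact ⟨Set.univ, G1 k⟩
        | succ j ih =>
          obtain ⟨B, hB⟩ := ih
          have h2 := (G2 k (k+j) (Nat.le_add_right _ _)).1
          rw [hB] at h2
          obtain ⟨d, hd, hEq⟩ := h2
          exact ⟨d, hEq.symm⟩
      choose B hB using claim1
      have hB0 : B 0 = Set.univ := coord_snd R ((hB 0).symm.trans (G1 k))
      have htrans : ∀ j, B (j+1) ∈ cov R ⟨f k, hfA k⟩ (B j) ((state R (hist f (k+j))).length) := by
        intro j
        have h2 := (G2 k (k+j) (Nat.le_add_right _ _)).1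
        rw [hB j] at h2
        obtain ⟨d, hd, hEq⟩ := h2
        have hde : d = B (j+1) := coord_snd R (hEq.trans (hB (j+1)))
        rwa [hde] at hd
      have hopen : ∀ j, IsOpen (B j) := by
        intro j
        cases j with
        | zero => rw [hB0]; exact isOpen_univ
        | succ j => exact cov_open R _ _ _ _ (htrans j)
      have hsub : ∀ j, B (j+1) ⊆ B j := fun j =>
        (cov_sub_diam R _ (B j) (hopen j) _ _ (htrans j)).1
      have hdiam : ∀ j, EMetric.diam (B (j+1)) ≤ eps (k+j+1) := by
        intro j
        have := (cov_sub_diam R _ (B j) (hopen j) _ _ (htrans j)).2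
        rwa [hlen] at this
      have hmono : ∀ j j', j ≤ j' → B j' ⊆ B j := by
        intro j j' h
        induction h with
        | refl => exact subset_rfl
        | step h ih => exact (hsub _).trans ih
      have hximg : ∀ j, x (k+j+1) ∈ (R ⟨f k, hfA k⟩).F '' B (j+1) := by
        intro j
        have h2 := (G2 k (k+j) (Nat.le_add_right _ _)).2
        have hB' := hB (j+1)
        rw [Nat.add_succ] at hB'
        rw [hB'] at h2
        exact h2 (hx (k+j+1))
      choose p hp hfp using hximg
      have hcauchy : CauchySeq p := by
        rw [EMetric.cauchySeq_iff]
        intro ε hε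
        obtain ⟨N, hN⟩ := exists_eps_lt hε
        refine ⟨N, fun m hm n hn => ?_⟩
        have h1 : p m ∈ B (N+1) := hmono _ _ (by omega) (hp m)
        have h2 : p n ∈ B (N+1) := hmono _ _ (by omega) (hp n)
        calc edist (p m) (p n) ≤ EMetric.diam (B (N+1)) :=
              EMetric.edist_le_diam_of_mem h1 h2
          _ ≤ eps (k+N+1) := hdiam N
          _ ≤ eps N := eps_anti (by omega)
          _ < ε := hN
      obtain ⟨q, hq⟩ := cauchySeq_tendsto_of_complete hcauchy
      have hFq : Filter.Tendsto (fun j => x (k+j+1)) Filter.atTop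
          (nhds ((R ⟨f k, hfA k⟩).F q)) := by
        have h1 := (((R ⟨f k, hfA k⟩).cont.tendsto q).comp hq)
        have h2 : (R ⟨f k, hfA k⟩).F ∘ p = fun j => x (k+j+1) := funext hfp
        rwa [h2] at h1
      have hxlim : Filter.Tendsto x Filter.atTop (nhds ((R ⟨f k, hfA k⟩).F q)) := by
        rw [← Filter.tendsto_add_atTop_iff_nat (k+1)]
        have : (fun n => x (n + (k+1))) = fun j => x (k+j+1) := by
          funext j; congr 1; omega
        rwa [this]
      refine ⟨_, hxlim, ?_⟩
      have : (R ⟨f k, hfA k⟩).F q ∈ Set.range (R ⟨f k, hfA k⟩).F := ⟨q, rfl⟩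
      rwa [(R ⟨f k, hfA k⟩).rng] at this
    choose z hz hzf using main
    have hzeq : ∀ k, z k = z 0 := fun k => tendsto_nhds_unique (hz k) (hz 0)
    exact ⟨z 0, Set.mem_iInter.2 fun k => (hzeq k) ▸ hzf k⟩
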